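/- arXiv:1409.6731 — 4 statements merged into one kernel-verified Lean document; each statement's English description precedes it below -/
import Mathlib

section
/- Let S be a Polish space equipped with its Borel σ-algebra, let P be a Borel probability measure on S, and let (μ_k) be a sequence of Borel probability measures on S such that sup_k KL(μ_k ‖ P) < ∞. If (μ_k) converges weakly to a Borel probability measure μ, then for every bounded Borel measurable function f : S → ℝ one has ∫_S f dμ_k → ∫_S f dμ as k → ∞. -/
open MeasureTheory Filter Topology BoundedContinuousFunction Classical

open ENNReal

/-- Relative entropy (Kullback–Leibler divergence): `∫ log (dμ/dP) dμ` when `μ ≪ P`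
(and the log-likelihood ratio is `μ`-integrable), and `+∞` otherwise. -/
noncomputable def klDiv {Ω : Type*} [MeasurableSpace Ω] (μ P : Measure Ω) : EReal :=
  if μ ≪ P ∧ Integrable (llr μ P) μ then ((∫ x, llr μ P x ∂μ : ℝ) : EReal) else ⊤

lemma integral_neg_llr_le_one {Ω : Type*} [MeasurableSpace Ω]
    (ν P : Measure Ω) [IsProbabilityMeasure ν] [IsProbabilityMeasure P]
    (hac : ν ≪ P) :
    ∫⁻ x, ENNReal.ofReal (max (-(llr ν P x)) 0) ∂ν ≤ 1 := by
  set ρ := ν.rnDeriv P with hρdef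
  have hmeasρ : Measurable ρ := Measure.measurable_rnDeriv ν P
  set g : Ω → ℝ≥0∞ := fun x => ENNReal.ofReal (max (-(llr ν P x)) 0) with hgdef
  have hgm : Measurable g := ((measurable_llr ν P).neg.max measurable_const).ennreal_ofReal
  rw [show (∫⁻ x, g x ∂ν) = ∫⁻ x, g x ∂(P.withDensity ρ) by
        rw [Measure.withDensity_rnDeriv_eq ν P hac],
      lintegral_withDensity_eq_lintegral_mul _ hmeasρ hgm]
  have hpt : ∀ x, (ρ * g) x ≤ 1 := by
    intro x
    simp only [Pi.mul_apply, hgdef]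
    have hllr : llr ν P x = Real.log (ρ x).toReal := rfl
    rcases le_or_gt 1 ((ρ x).toReal) with h1 | h1
    · have : max (-(llr ν P x)) 0 = 0 := by
        rw [hllr, max_eq_right]
        simp only [neg_nonpos]
        exact Real.log_nonneg h1
      simp [this]
    rcases eq_or_lt_of_le (ENNReal.toReal_nonneg (a := ρ x)) with h0 | h0
    · have : max (-(llr ν P x)) 0 = 0 := by
        rw [hllr, ← h0]
        simp [Real.log_zero]
      simp [this]
    · have hfin : ρ x ≠ ⊤ := by
        intro hcon
        rw [hcon] at h0
        simp at h0
      have hρx : ρ x = ENNReal.ofReal (ρ x).toReal := (ENNReal.ofReal_toReal hfin).symm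
      have hlog : max (-(llr ν P x)) 0 ≤ ((ρ x).toReal)⁻¹ := by
        rw [hllr]
        apply max_le _ (by positivity)
        rw [← Real.log_inv]
        linarith [Real.log_le_sub_one_of_pos (inv_pos.mpr h0)]
      calc ρ x * ENNReal.ofReal (max (-(llr ν P x)) 0)
          ≤ ENNReal.ofReal (ρ x).toReal * ENNReal.ofReal ((ρ x).toReal)⁻¹ := by
            rw [← hρx]; exact mul_le_mul_right (ENNReal.ofReal_le_ofReal hlog) _
        _ = ENNReal.ofReal ((ρ x).toReal * ((ρ x).toReal)⁻¹) :=
            (ENNReal.ofReal_mul (le_of_lt h0)).symm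
        _ ≤ 1 := by rw [mul_inv_cancel₀ (ne_of_gt h0)]; simp
  calc ∫⁻ x, (ρ * g) x ∂P
      ≤ ∫⁻ _, 1 ∂P := lintegral_mono hpt
    _ = 1 := by simp

lemma integral_neg_llr_le_one' {Ω : Type*} [MeasurableSpace Ω]
    (ν P : Measure Ω) [IsProbabilityMeasure ν] [IsProbabilityMeasure P]
    (hac : ν ≪ P)
    (hkey : ∫⁻ x, ENNReal.ofReal (max (-(llr ν P x)) 0) ∂ν ≤ 1) :
    ∫ x, max (-(llr ν P x)) 0 ∂ν ≤ 1 := by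
  have heq := integral_eq_lintegral_of_nonneg_ae (μ := ν)
    (f := fun x => max (-(llr ν P x)) 0) (ae_of_all _ fun x => le_max_right _ _)
    (((measurable_llr ν P).neg.max measurable_const).aestronglyMeasurable)
  rw [heq]
  calc (∫⁻ x, ENNReal.ofReal (max (-(llr ν P x)) 0) ∂ν).toReal
      ≤ (1 : ℝ≥0∞).toReal := ENNReal.toReal_mono one_ne_top hkey
    _ = 1 := by simp

lemma meas_le_of_llr_bound {Ω : Type*} [MeasurableSpace Ω]
    (ν P : Measure Ω) [IsProbabilityMeasure ν] [IsProbabilityMeasure P]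
    (hac : ν ≪ P) (hint : Integrable (llr ν P) ν)
    (hneg : ∫ x, max (-(llr ν P x)) 0 ∂ν ≤ 1)
    {B : ℝ} (hB : ∫ x, llr ν P x ∂ν ≤ B)
    {A : Set Ω} (hA : MeasurableSet A) {M : ℝ} (hM : 1 < M) :
    (ν A).toReal ≤ M * (P A).toReal + (B + 1) / Real.log M := by
  set ρ := ν.rnDeriv P with hρdef
  have hmeasρ : Measurable ρ := Measure.measurable_rnDeriv ν P
  have hM0 : (0:ℝ) < M := lt_trans one_pos hM
  have hlogM : 0 < Real.log M := Real.log_pos hM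
  set T : Set Ω := {x | ρ x ≤ ENNReal.ofReal M} with hTdef
  have hTm : MeasurableSet T := hmeasρ measurableSet_Iic
  -- Part 1
  have h1 : ν (A ∩ T) ≤ ENNReal.ofReal M * P A := by
    rw [← Measure.setLIntegral_rnDeriv' hac (hA.inter hTm)]
    calc ∫⁻ x in A ∩ T, ρ x ∂P
        ≤ ∫⁻ _ in A ∩ T, ENNReal.ofReal M ∂P := by
          refine setLIntegral_mono measurable_const fun x hx => hx.2
      _ = ENNReal.ofReal M * P (A ∩ T) := by rw [setLIntegral_const]
      _ ≤ ENNReal.ofReal M * P A :=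
          mul_le_mul_right (measure_mono Set.inter_subset_left) _
  -- Markov on the positive part
  set φ : Ω → ℝ := fun x => max (llr ν P x) 0 with hφdef
  have hφint : Integrable φ ν := hint.pos_part
  have hφsum : ∀ x, φ x = llr ν P x + max (-(llr ν P x)) 0 := by
    intro x
    rcases le_total (llr ν P x) 0 with h | h
    · rw [hφdef]; simp only []
      rw [max_eq_right h, max_eq_left (by linarith)]; ring
    · rw [hφdef]; simp only []
      rw [max_eq_left h, max_eq_right (by linarith)]; ring
  have hφle : ∫ x, φ x ∂ν ≤ B + 1 := by
    calc ∫ x, φ x ∂ν = ∫ x, (llr ν P x + max (-(llr ν P x)) 0) ∂ν := by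
          exact integral_congr_ae (ae_of_all _ hφsum)
      _ = ∫ x, llr ν P x ∂ν + ∫ x, max (-(llr ν P x)) 0 ∂ν :=
          integral_add hint hint.neg.pos_part
      _ ≤ B + 1 := add_le_add hB hneg
  have hmarkov := mul_meas_ge_le_integral_of_nonneg
    (ae_of_all ν fun x => le_max_right (llr ν P x) 0) hφint (Real.log M)
  have h2 : (ν Tᶜ).toReal ≤ (B + 1) / Real.log M := by
    have hnullset : P {x | ¬ ρ x < ⊤} = 0 := ae_iff.mp (Measure.rnDeriv_lt_top ν P)
    have hsub : Tᶜ ⊆ {x | Real.log M ≤ φ x} ∪ {x | ¬ ρ x < ⊤} := by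
      intro x hx
      rcases lt_or_ge (ρ x) ⊤ with hfin | hinf
      · left
        have hlt : ENNReal.ofReal M < ρ x := not_le.mp hx
        have : M < (ρ x).toReal :=
          (ENNReal.ofReal_lt_iff_lt_toReal (le_of_lt hM0) hfin.ne).mp hlt
        have hlog : Real.log M ≤ llr ν P x := by
          rw [show llr ν P x = Real.log (ρ x).toReal from rfl]
          exact Real.log_le_log hM0 (le_of_lt this)
        exact le_trans hlog (le_max_left _ _)
      · right; simpa using hinf
    have hνT : ν Tᶜ ≤ ν {x | Real.log M ≤ φ x} := by
      calc ν Tᶜ ≤ ν ({x | Real.log M ≤ φ x} ∪ {x | ¬ ρ x < ⊤}) := measure_mono hsub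
        _ ≤ ν {x | Real.log M ≤ φ x} + ν {x | ¬ ρ x < ⊤} := measure_union_le _ _
        _ = ν {x | Real.log M ≤ φ x} := by rw [hac hnullset, add_zero]
    have hmark2 : (ν {x | Real.log M ≤ φ x}).toReal ≤ (B + 1) / Real.log M := by
      rw [le_div_iff₀ hlogM, mul_comm]
      exact le_trans hmarkov hφle
    exact le_trans (ENNReal.toReal_mono (measure_ne_top _ _) hνT) hmark2
  -- combine
  have hsplit : ν A ≤ ν (A ∩ T) + ν Tᶜ := by
    calc ν A ≤ ν ((A ∩ T) ∪ Tᶜ) := measure_mono (by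
          intro x hx
          by_cases h : x ∈ T
          · exact Or.inl ⟨hx, h⟩
          · exact Or.inr h)
      _ ≤ ν (A ∩ T) + ν Tᶜ := measure_union_le _ _
  calc (ν A).toReal ≤ (ν (A ∩ T) + ν Tᶜ).toReal :=
        ENNReal.toReal_mono (by
          exact ENNReal.add_ne_top.mpr ⟨measure_ne_top _ _, measure_ne_top _ _⟩) hsplit
    _ = (ν (A ∩ T)).toReal + (ν Tᶜ).toReal :=
        ENNReal.toReal_add (measure_ne_top _ _) (measure_ne_top _ _)
    _ ≤ M * (P A).toReal + (B + 1) / Real.log M := by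
        refine add_le_add ?_ h2
        calc (ν (A ∩ T)).toReal ≤ (ENNReal.ofReal M * P A).toReal :=
              ENNReal.toReal_mono (by
                exact ENNReal.mul_ne_top ENNReal.ofReal_ne_top (measure_ne_top _ _)) h1
          _ = M * (P A).toReal := by
              rw [ENNReal.toReal_mul, ENNReal.toReal_ofReal (le_of_lt hM0)]

lemma abs_clip_le {C t : ℝ} (hC : 0 ≤ C) : |max (-C) (min C t)| ≤ C := by
  rw [abs_le]
  constructor
  · exact le_max_left _ _
  · exact max_le (by linarith) (min_le_left _ _)

lemma abs_sub_clip_le {C t u : ℝ} (hu : |u| ≤ C) :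
    |u - max (-C) (min C t)| ≤ |u - t| := by
  have h1 : -C ≤ u := neg_le_of_abs_le hu
  have h2 : u ≤ C := le_of_abs_le hu
  have hC : 0 ≤ C := le_trans (abs_nonneg u) hu
  rcases le_total t (-C) with h | h
  · rw [min_eq_right (by linarith), max_eq_left h]
    rw [abs_of_nonneg (by linarith), abs_of_nonneg (by linarith)]
    linarith
  · rcases le_total C t with h' | h'
    · rw [min_eq_left h', max_eq_right (by linarith)]
      rw [abs_of_nonpos (by linarith), abs_of_nonpos (by linarith)]
      linarith
    · rw [min_eq_right h', max_eq_right h]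

set_option maxHeartbeats 1000000 in
theorem integral_tendsto_of_weak_conv_of_bounded_klDiv
    {S : Type*} [TopologicalSpace S] [PolishSpace S] [MeasurableSpace S] [BorelSpace S]
    (P : Measure S) [IsProbabilityMeasure P]
    (μ : ℕ → Measure S) (hμ : ∀ k, IsProbabilityMeasure (μ k))
    (μlim : Measure S) [IsProbabilityMeasure μlim]
    (hKL : ∃ B : ℝ, ∀ k, klDiv (μ k) P ≤ (B : EReal))
    (hweak : ∀ g : S →ᵇ ℝ,
      Tendsto (fun k => ∫ x, g x ∂(μ k)) atTop (𝓝 (∫ x, g x ∂μlim)))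
    (f : S → ℝ) (hf : Measurable f) (hfbd : ∃ C : ℝ, ∀ x, |f x| ≤ C) :
    Tendsto (fun k => ∫ x, f x ∂(μ k)) atTop (𝓝 (∫ x, f x ∂μlim)) := by
  classical
  letI := TopologicalSpace.upgradeIsCompletelyMetrizable S
  obtain ⟨B₀, hKL⟩ := hKL
  set B := max B₀ 0 with hBdef
  have hB1 : (0:ℝ) < B + 1 := by
    have : (0:ℝ) ≤ B := le_max_right _ _
    linarith
  -- extract consequences of the KL bound
  have hinfo : ∀ k, (μ k) ≪ P ∧ Integrable (llr (μ k) P) (μ k) ∧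
      ∫ x, llr (μ k) P x ∂(μ k) ≤ B := by
    intro k
    have h := hKL k
    by_cases hc : (μ k) ≪ P ∧ Integrable (llr (μ k) P) (μ k)
    · refine ⟨hc.1, hc.2, ?_⟩
      simp only [klDiv, if_pos hc] at h
      have hle : (∫ x, llr (μ k) P x ∂(μ k)) ≤ B₀ := by exact_mod_cast h
      exact hle.trans (le_max_left _ _)
    · simp only [klDiv, if_neg hc] at h
      exact absurd h (by simp)
  -- the uniform absolute-continuity bound
  have hbound : ∀ k, ∀ {A : Set S}, MeasurableSet A → ∀ {M : ℝ}, 1 < M →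
      ((μ k) A).toReal ≤ M * (P A).toReal + (B + 1) / Real.log M := by
    intro k A hA M hM
    haveI := hμ k
    obtain ⟨hac, hint, hB⟩ := hinfo k
    exact meas_le_of_llr_bound (μ k) P hac hint
      (integral_neg_llr_le_one' (μ k) P hac (integral_neg_llr_le_one (μ k) P hac)) hB hA hM
  -- bounds on f
  obtain ⟨C₀, hC₀⟩ := hfbd
  set C := max C₀ 1 with hCdef
  have hC1 : (1:ℝ) ≤ C := le_max_right _ _
  have hC0 : (0:ℝ) < C := lt_of_lt_of_le one_pos hC1
  have hC : ∀ x, |f x| ≤ C := fun x => (hC₀ x).trans (le_max_left _ _)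
  have hfint : ∀ (m : Measure S), IsProbabilityMeasure m → Integrable f m := by
    intro m hm
    exact Integrable.mono' (integrable_const C) hf.aestronglyMeasurable
      (ae_of_all _ fun x => by rw [Real.norm_eq_abs]; exact hC x)
  -- probability measure versions and weak convergence
  let ν : ℕ → ProbabilityMeasure S := fun k => ⟨μ k, hμ k⟩
  let νl : ProbabilityMeasure S := ⟨μlim, inferInstance⟩
  have hconv : Tendsto ν atTop (𝓝 νl) :=
    ProbabilityMeasure.tendsto_iff_forall_integral_tendsto.mpr hweak
  -- main estimate
  rw [Metric.tendsto_atTop]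
  intro ε hε
  set δ : ℝ := ε / 8 with hδdef
  have hδ : 0 < δ := by positivity
  set M : ℝ := Real.exp (max ((B + 1) * (2 * C) * 8 / ε) 1) with hMdef
  have hM1 : 1 < M := by
    have h0 : (0:ℝ) < max ((B + 1) * (2 * C) * 8 / ε) 1 := lt_of_lt_of_le one_pos (le_max_right _ _)
    have h1 : Real.exp 0 < Real.exp (max ((B + 1) * (2 * C) * 8 / ε) 1) :=
      Real.exp_lt_exp.mpr h0
    rw [Real.exp_zero] at h1
    exact h1
  have hM0 : (0:ℝ) < M := lt_trans one_pos hM1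
  have hlogM : Real.log M = max ((B + 1) * (2 * C) * 8 / ε) 1 := Real.log_exp _
  have hlogMpos : 0 < Real.log M := by rw [hlogM]; exact lt_of_lt_of_le one_pos (le_max_right _ _)
  have hquot : 2 * C * ((B + 1) / Real.log M) ≤ ε / 8 := by
    have hexpr : (0:ℝ) < (B + 1) * (2 * C) * 8 / ε := by
      apply div_pos _ hε
      nlinarith
    have h1 : (B + 1) * (2 * C) * 8 / ε ≤ Real.log M := by
      rw [hlogM]; exact le_max_left _ _
    have h2 : (B + 1) / Real.log M ≤ (B + 1) / ((B + 1) * (2 * C) * 8 / ε) :=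
      div_le_div_of_nonneg_left (le_of_lt hB1) hexpr h1
    have h3 : (B + 1) / ((B + 1) * (2 * C) * 8 / ε) = ε / (2 * C * 8) := by
      field_simp
    rw [h3] at h2
    calc 2 * C * ((B + 1) / Real.log M) ≤ 2 * C * (ε / (2 * C * 8)) := by nlinarith
      _ = ε / 8 := by field_simp
  set w : ℝ := ε / (16 * C * M) with hwdef
  have hw0 : 0 < w := by positivity
  have h2CMw : 2 * C * (M * w) = ε / 8 := by
    rw [hwdef]; field_simp; ring
  -- choose a bounded continuous approximation of f in L¹(P)
  have hθ : 0 < δ * w / 2 := by positivity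
  obtain ⟨g₀, hg₀, hg₀int⟩ :=
    (hfint P inferInstance).exists_boundedContinuous_integral_sub_le hθ
  -- clip it
  have hlip : LipschitzWith 1 (fun t : ℝ => max (-C) (min C t)) :=
    (LipschitzWith.id.const_min C).const_max (-C)
  set g : S →ᵇ ℝ := BoundedContinuousFunction.comp _ hlip g₀ with hgdef
  have hgval : ∀ x, g x = max (-C) (min C (g₀ x)) := fun x => rfl
  have hgabs : ∀ x, |g x| ≤ C := fun x => by rw [hgval]; exact abs_clip_le (le_of_lt hC0)
  have hgclose : ∀ x, |f x - g x| ≤ |f x - g₀ x| := fun x => by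
    rw [hgval]; exact abs_sub_clip_le (hC x)
  have hgintP : Integrable (fun x => f x - g x) P :=
    (hfint P inferInstance).sub (g.integrable P)
  have hfgP : ∫ x, |f x - g x| ∂P ≤ δ * w / 2 := by
    calc ∫ x, |f x - g x| ∂P ≤ ∫ x, |f x - g₀ x| ∂P := by
          refine integral_mono hgintP.abs ?_ hgclose
          exact ((hfint P inferInstance).sub hg₀int).abs
      _ = ∫ x, ‖f x - g₀ x‖ ∂P := by simp [Real.norm_eq_abs]
      _ ≤ δ * w / 2 := hg₀
  -- the bad set
  set A : Set S := {x | δ ≤ |f x - g x|} with hAdef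
  have hAm : MeasurableSet A :=
    measurableSet_le measurable_const (hf.sub g.continuous.measurable).abs
  have hPA : (P A).toReal ≤ w / 2 := by
    have hmark := mul_meas_ge_le_integral_of_nonneg
      (ae_of_all P fun x => abs_nonneg (f x - g x)) hgintP.abs δ
    have : δ * (P A).toReal ≤ δ * w / 2 := le_trans hmark hfgP
    calc (P A).toReal = δ * (P A).toReal / δ := by field_simp
      _ ≤ δ * w / 2 / δ := by apply div_le_div_of_nonneg_right this hδ.le
      _ = w / 2 := by field_simp
  -- an open set containing A with small P measure
  have hPAlt : P A < P A + ENNReal.ofReal (w / 2) :=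
    ENNReal.lt_add_right (measure_ne_top _ _)
      (ENNReal.ofReal_pos.mpr (by positivity : (0:ℝ) < w / 2)).ne'
  obtain ⟨U, hAU, hUopen, hU⟩ := Set.exists_isOpen_lt_of_lt A _ hPAlt
  have hPU : (P U).toReal ≤ w := by
    have h1 : (P U).toReal ≤ (P A + ENNReal.ofReal (w / 2)).toReal :=
      ENNReal.toReal_mono (by
        exact ENNReal.add_ne_top.mpr ⟨measure_ne_top _ _, ENNReal.ofReal_ne_top⟩) (le_of_lt hU)
    rw [ENNReal.toReal_add (measure_ne_top _ _) ENNReal.ofReal_ne_top,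
      ENNReal.toReal_ofReal (by positivity : (0:ℝ) ≤ w / 2)] at h1
    linarith [hPA]
  -- the common bound
  set c : ℝ := M * (P U).toReal + (B + 1) / Real.log M with hcdef
  have hc0 : 0 ≤ c := by
    apply add_nonneg
    · exact mul_nonneg (le_of_lt hM0) ENNReal.toReal_nonneg
    · exact div_nonneg (le_of_lt hB1) (le_of_lt hlogMpos)
  have hkU : ∀ k, ((μ k) U).toReal ≤ c := fun k => hbound k hUopen.measurableSet hM1
  have hlimU : (μlim U).toReal ≤ c := by
    have hmono : (νl : Measure S) U ≤ atTop.liminf fun k => (ν k : Measure S) U :=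
      ProbabilityMeasure.le_liminf_measure_open_of_tendsto hconv hUopen
    have hlimle : (atTop.liminf fun k => (ν k : Measure S) U) ≤ ENNReal.ofReal c := by
      calc (atTop.liminf fun k => (ν k : Measure S) U)
          ≤ atTop.liminf fun _ => ENNReal.ofReal c := by
            exact liminf_le_liminf (Eventually.of_forall fun k =>
              (ENNReal.le_ofReal_iff_toReal_le (measure_ne_top _ _) hc0).mpr (hkU k))
        _ = ENNReal.ofReal c := liminf_const _
    have := hmono.trans hlimle
    calc (μlim U).toReal ≤ (ENNReal.ofReal c).toReal := ENNReal.toReal_mono ofReal_ne_top this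
      _ = c := ENNReal.toReal_ofReal hc0
  -- common estimate on ∫ |f - g| against any of the measures
  have hcbound : 2 * C * c ≤ ε / 8 + ε / 8 := by
    have h1 : 2 * C * (M * (P U).toReal) ≤ 2 * C * (M * w) := by nlinarith
    calc 2 * C * c = 2 * C * (M * (P U).toReal) + 2 * C * ((B + 1) / Real.log M) := by
          rw [hcdef]; ring
      _ ≤ 2 * C * (M * w) + (ε / 8) := add_le_add h1 hquot
      _ = ε / 8 + ε / 8 := by rw [h2CMw]
  have hdiff : ∀ (m : Measure S), IsProbabilityMeasure m → (m U).toReal ≤ c →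
      |∫ x, f x ∂m - ∫ x, g x ∂m| ≤ δ + (ε / 8 + ε / 8) := by
    intro m hm hmU
    have hgint : Integrable (⇑g) m := g.integrable m
    have hfmint := hfint m hm
    have hptwise : ∀ x, |f x - g x| ≤ δ + (2 * C) * A.indicator (1 : S → ℝ) x := by
      intro x
      by_cases hx : x ∈ A
      · rw [Set.indicator_of_mem hx, Pi.one_apply]
        have : |f x - g x| ≤ 2 * C := by
          calc |f x - g x| ≤ |f x| + |g x| := abs_sub _ _
            _ ≤ C + C := add_le_add (hC x) (hgabs x)
            _ = 2 * C := by ring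
        linarith
      · rw [Set.indicator_of_notMem hx]
        have : ¬ δ ≤ |f x - g x| := hx
        push_neg at this
        linarith
    have hindint : Integrable (fun x => (2 * C) * A.indicator (1 : S → ℝ) x) m :=
      (((integrable_const (1:ℝ)).indicator hAm)).const_mul (2 * C)
    have hint1 : ∫ x, |f x - g x| ∂m ≤ δ + 2 * C * (m A).toReal := by
      calc ∫ x, |f x - g x| ∂m
          ≤ ∫ x, (δ + (2 * C) * A.indicator (1 : S → ℝ) x) ∂m := by
            refine integral_mono (hfmint.sub hgint).abs ?_ hptwise
            exact (integrable_const δ).add hindint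
        _ = δ + 2 * C * (m A).toReal := by
            rw [integral_add (integrable_const δ) hindint, integral_const,
              integral_const_mul, integral_indicator_one hAm]
            simp [Measure.real]
    have hmA : (m A).toReal ≤ (m U).toReal :=
      ENNReal.toReal_mono (measure_ne_top _ _) (measure_mono hAU)
    have habs : |∫ x, f x ∂m - ∫ x, g x ∂m| ≤ ∫ x, |f x - g x| ∂m := by
      rw [← integral_sub hfmint hgint]
      calc |∫ x, (f x - g x) ∂m| = ‖∫ x, (f x - g x) ∂m‖ := (Real.norm_eq_abs _).symm
        _ ≤ ∫ x, ‖f x - g x‖ ∂m := norm_integral_le_integral_norm _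
        _ = ∫ x, |f x - g x| ∂m := by simp [Real.norm_eq_abs]
    calc |∫ x, f x ∂m - ∫ x, g x ∂m| ≤ δ + 2 * C * (m A).toReal := habs.trans hint1
      _ ≤ δ + 2 * C * c := by nlinarith [hmA.trans hmU]
      _ ≤ δ + (ε / 8 + ε / 8) := by linarith [hcbound]
  -- conclude
  have hgconv := hweak g
  rw [Metric.tendsto_atTop] at hgconv
  obtain ⟨N, hN⟩ := hgconv (ε / 8) (by positivity)
  refine ⟨N, fun n hn => ?_⟩
  have h1 := hdiff (μ n) (hμ n) (hkU n)
  have h2 := hdiff μlim inferInstance hlimU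
  have h3 : |∫ x, g x ∂(μ n) - ∫ x, g x ∂μlim| < ε / 8 := by
    have := hN n hn
    rwa [Real.dist_eq] at this
  rw [Real.dist_eq]
  have htriangle : |∫ x, f x ∂(μ n) - ∫ x, f x ∂μlim| ≤
      |∫ x, f x ∂(μ n) - ∫ x, g x ∂(μ n)| + |∫ x, g x ∂(μ n) - ∫ x, g x ∂μlim| +
        |∫ x, g x ∂μlim - ∫ x, f x ∂μlim| := by
    have := abs_sub_le (∫ x, f x ∂(μ n)) (∫ x, g x ∂μlim) (∫ x, f x ∂μlim)
    have h4 := abs_sub_le (∫ x, f x ∂(μ n)) (∫ x, g x ∂(μ n)) (∫ x, g x ∂μlim)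
    linarith
  have h2' : |∫ x, g x ∂μlim - ∫ x, f x ∂μlim| ≤ δ + (ε / 8 + ε / 8) := by
    rw [abs_sub_comm]; exact h2
  calc |∫ x, f x ∂(μ n) - ∫ x, f x ∂μlim|
      ≤ (δ + (ε / 8 + ε / 8)) + (ε / 8) + (δ + (ε / 8 + ε / 8)) := by
        have := htriangle
        linarith [h1, h3, h2']
    _ < ε := by rw [hδdef]; linarith
end

section
/- Let S be a Polish space equipped with its Borel σ-algebra, let P be a Borel probability measure on S, and let (μ_k) be a sequence of Borel probability measures on S such that sup_k KL(μ_k ‖ P) < ∞ and such that (μ_k) converges weakly to a Borel probability measure μ. Let (f_k) be a sequence of Borel measurable functions f_k : S → ℝ that is uniformly bounded (there exists C with |f_k(x)| ≤ C for all k and x) and converges P-almost everywhere to a Borel measurable function f. Then ∫_S f_k dμ_k → ∫_S f dμ as k → ∞. -/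
open MeasureTheory Filter Topology BoundedContinuousFunction Classical

lemma young_aux (u v : ℝ) (hu : 0 ≤ u) : u * v ≤ u * Real.log u - u + Real.exp v := by
  rcases eq_or_lt_of_le hu with h | h
  · simp [← h]; positivity
  · have h1 : Real.exp (v - Real.log u) ≥ v - Real.log u + 1 := by
      have := Real.add_one_le_exp (v - Real.log u); linarith
    have h2 : Real.exp (v - Real.log u) * u = Real.exp v := by
      rw [Real.exp_sub, Real.exp_log h]; field_simp
    nlinarith [Real.exp_log h]

lemma change_of_measure {S : Type*} [MeasurableSpace S] (P ν : Measure S)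
    [IsProbabilityMeasure P] [IsProbabilityMeasure ν]
    (hac : ν ≪ P) (hint : Integrable (llr ν P) ν)
    (g : S → ℝ) (hg : Measurable g) (M : ℝ) (hgb : ∀ᵐ x ∂P, |g x| ≤ M) :
    ∫ x, g x ∂ν ≤ ∫ x, llr ν P x ∂ν + (∫ x, Real.exp (g x) ∂P - 1) := by
  set ρ : S → ℝ := fun x => (ν.rnDeriv P x).toReal with hρ
  have hgbν : ∀ᵐ x ∂ν, |g x| ≤ M := hac.ae_le hgb
  have hintg : Integrable g ν := by
    refine Integrable.mono' (integrable_const M) (hg.aestronglyMeasurable) ?_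
    filter_upwards [hgbν] with x hx using by simpa using hx
  have h1 : ∫ x, g x ∂ν = ∫ x, ρ x • g x ∂P := (integral_rnDeriv_smul hac).symm
  have h2 : ∫ x, llr ν P x ∂ν = ∫ x, ρ x • llr ν P x ∂P := (integral_rnDeriv_smul hac).symm
  have hρint : Integrable ρ P := Measure.integrable_toReal_rnDeriv
  have hρ1 : ∫ x, ρ x ∂P = 1 := by
    rw [hρ, Measure.integral_toReal_rnDeriv hac]; simp
  have hexpint : Integrable (fun x => Real.exp (g x)) P := by
    refine Integrable.mono' (integrable_const (Real.exp M)) (hg.exp.aestronglyMeasurable) ?_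
    filter_upwards [hgb] with x hx
    rw [Real.norm_eq_abs, abs_of_pos (Real.exp_pos _)]
    exact Real.exp_le_exp.2 (le_trans (le_abs_self _) hx)
  have hLint : Integrable (fun x => ρ x • llr ν P x) P :=
    (integrable_rnDeriv_smul_iff hac).2 hint
  have hGint : Integrable (fun x => ρ x • g x) P :=
    (integrable_rnDeriv_smul_iff hac).2 hintg
  have key : ∀ x, ρ x • g x ≤ ρ x • llr ν P x - ρ x + Real.exp (g x) := by
    intro x
    have : llr ν P x = Real.log (ρ x) := rfl
    rw [this, smul_eq_mul, smul_eq_mul]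
    exact young_aux _ _ ENNReal.toReal_nonneg
  have hsub : Integrable (fun x => ρ x • llr ν P x - ρ x) P := hLint.sub hρint
  calc ∫ x, g x ∂ν = ∫ x, ρ x • g x ∂P := h1
    _ ≤ ∫ x, (ρ x • llr ν P x - ρ x + Real.exp (g x)) ∂P := by
        refine integral_mono hGint (hsub.add hexpint) ?_
        exact fun x => key x
    _ = ∫ x, ρ x • llr ν P x ∂P - ∫ x, ρ x ∂P + ∫ x, Real.exp (g x) ∂P := by
        rw [integral_add hsub hexpint]
        congr 1
        exact integral_sub hLint hρint
    _ = ∫ x, llr ν P x ∂ν + (∫ x, Real.exp (g x) ∂P - 1) := by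
        rw [← h2, hρ1]; ring

lemma meas_bound {S : Type*} [MeasurableSpace S] (P ν : Measure S)
    [IsProbabilityMeasure P] [IsProbabilityMeasure ν]
    (hac : ν ≪ P) (hint : Integrable (llr ν P) ν)
    (B : ℝ) (hKL : ∫ x, llr ν P x ∂ν ≤ B)
    {A : Set S} (hA : MeasurableSet A) {t : ℝ} (ht : 0 < t) :
    (ν A).toReal ≤ (B + (Real.exp t - 1) * (P A).toReal) / t := by
  set g : S → ℝ := A.indicator (fun _ => t) with hgdef
  have hgmeas : Measurable g := measurable_const.indicator hA
  have hgb : ∀ᵐ x ∂P, |g x| ≤ t := by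
    refine Eventually.of_forall fun x => ?_
    by_cases hx : x ∈ A <;> simp [hgdef, hx, Set.indicator_of_mem, Set.indicator_of_notMem,
      abs_of_pos ht, ht.le]
  have h1 : ∫ x, g x ∂ν = (ν A).toReal * t := by
    rw [hgdef, integral_indicator_const _ hA]; simp [mul_comm, measureReal_def]
  have h2 : ∀ x, Real.exp (g x) = A.indicator (fun _ => Real.exp t - 1) x + 1 := by
    intro x
    by_cases hx : x ∈ A <;> simp [hgdef, hx]
  have h3 : ∫ x, Real.exp (g x) ∂P = (P A).toReal * (Real.exp t - 1) + 1 := by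
    simp_rw [h2]
    rw [integral_add ((integrable_const _).indicator hA) (integrable_const 1),
      integral_indicator_const _ hA]
    simp [mul_comm, measureReal_def]
  have := change_of_measure P ν hac hint g hgmeas t hgb
  rw [h1, h3] at this
  rw [le_div_iff₀ ht]
  nlinarith

set_option maxHeartbeats 1000000 in
theorem integral_tendsto_of_weak_conv_of_bounded_klDiv_ae
    {S : Type*} [TopologicalSpace S] [PolishSpace S] [MeasurableSpace S] [BorelSpace S]
    (P : Measure S) [IsProbabilityMeasure P]
    (μ : ℕ → Measure S) (hμ : ∀ k, IsProbabilityMeasure (μ k))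
    (μlim : Measure S) [IsProbabilityMeasure μlim]
    (hKL : ∃ B : ℝ, ∀ k, klDiv (μ k) P ≤ (B : EReal))
    (hweak : ∀ g : S →ᵇ ℝ,
      Tendsto (fun k => ∫ x, g x ∂(μ k)) atTop (𝓝 (∫ x, g x ∂μlim)))
    (f : ℕ → S → ℝ) (hfmeas : ∀ k, Measurable (f k))
    (C : ℝ) (hfbd : ∀ k x, |f k x| ≤ C)
    (flim : S → ℝ) (hflim : Measurable flim)
    (hae : ∀ᵐ x ∂P, Tendsto (fun k => f k x) atTop (𝓝 (flim x))) :
    Tendsto (fun k => ∫ x, f k x ∂(μ k)) atTop (𝓝 (∫ x, flim x ∂μlim)) := by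
  classical
  letI : PseudoMetricSpace S := TopologicalSpace.pseudoMetrizableSpacePseudoMetric S
  haveI : ∀ k, IsProbabilityMeasure (μ k) := hμ
  obtain ⟨B₀, hB₀⟩ := hKL
  set B : ℝ := max B₀ 0 with hBdef
  have hBnn : 0 ≤ B := le_max_right _ _
  have hprop : ∀ k, μ k ≪ P ∧ Integrable (llr (μ k) P) (μ k) ∧
      ∫ x, llr (μ k) P x ∂(μ k) ≤ B := by
    intro k
    have h := hB₀ k
    rw [klDiv] at h
    split_ifs at h with hc
    · exact ⟨hc.1, hc.2, le_trans (by exact_mod_cast h) (le_max_left _ _)⟩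
    · exact absurd h (by simp)
  have hSne : Nonempty S := by
    by_contra h
    rw [not_nonempty_iff] at h
    have h1 : P Set.univ = 1 := measure_univ
    rw [Set.univ_eq_empty_iff.2 h] at h1
    simp at h1
  have hCnn : 0 ≤ C := le_trans (abs_nonneg _) (hfbd 0 (Classical.arbitrary S))
  have hflimC : ∀ᵐ x ∂P, |flim x| ≤ C := by
    filter_upwards [hae] with x hx
    exact le_of_tendsto hx.abs (Eventually.of_forall fun k => hfbd k x)
  have hflimInt : ∀ (ν : Measure S), IsProbabilityMeasure ν → ν ≪ P → Integrable flim ν := by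
    intro ν hνp hν
    haveI := hνp
    refine Integrable.mono' (integrable_const C) hflim.aestronglyMeasurable ?_
    filter_upwards [hν.ae_le hflimC] with x hx using by simpa using hx
  have hfkInt : ∀ k, Integrable (f k) (μ k) := by
    intro k
    exact Integrable.mono' (integrable_const C) (hfmeas k).aestronglyMeasurable
      (Eventually.of_forall fun x => by simpa using hfbd k x)
  -- Portmanteau: open sets
  have hOpen : ∀ G : Set S, IsOpen G → μlim G ≤ atTop.liminf fun k => μ k G := by
    intro G hGopen
    have htendp := (ProbabilityMeasure.tendsto_iff_forall_integral_tendsto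
      (μs := fun k => (⟨μ k, hμ k⟩ : ProbabilityMeasure S))
      (μ := (⟨μlim, inferInstance⟩ : ProbabilityMeasure S)) (F := atTop)).mpr
      (fun g => hweak g)
    exact MeasureTheory.le_measure_liminf_of_limsup_measure_compl_le hGopen.measurableSet
      (ProbabilityMeasure.limsup_measure_closed_le_of_tendsto htendp hGopen.isClosed_compl)
  have hbound_k : ∀ k {A : Set S}, MeasurableSet A → ∀ {t : ℝ}, 0 < t →
      (μ k A).toReal ≤ (B + (Real.exp t - 1) * (P A).toReal) / t := by
    intro k A hA t ht
    exact meas_bound P (μ k) (hprop k).1 (hprop k).2.1 B (hprop k).2.2 hA ht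
  have hbound_lim : ∀ {A : Set S}, MeasurableSet A → ∀ {t : ℝ}, 0 < t →
      (μlim A).toReal ≤ (B + (Real.exp t - 1) * (P A).toReal) / t := by
    intro A hA t ht
    have hcpos : 0 < Real.exp t - 1 := by linarith [Real.add_one_le_exp t]
    refine le_of_forall_pos_le_add fun ε hε => ?_
    obtain ⟨c, hcdef⟩ : ∃ c : ℝ, c = Real.exp t - 1 := ⟨_, rfl⟩
    rw [← hcdef]
    rw [← hcdef] at hcpos
    obtain ⟨ε', hε'def⟩ : ∃ e : ℝ, e = ε * t / c := ⟨_, rfl⟩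
    have hε' : 0 < ε' := by rw [hε'def]; positivity
    obtain ⟨U, hAU, hUopen, hPU⟩ := A.exists_isOpen_lt_of_lt (P A + ENNReal.ofReal ε')
      (ENNReal.lt_add_right (measure_ne_top _ _) (ENNReal.ofReal_pos.mpr hε').ne')
    obtain ⟨r, hrdef⟩ : ∃ r : ℝ, r = (B + c * (P U).toReal) / t := ⟨_, rfl⟩
    have hrnn : 0 ≤ r := by
      rw [hrdef]
      apply div_nonneg _ ht.le
      have h0 : (0:ℝ) ≤ (P U).toReal := ENNReal.toReal_nonneg
      nlinarith
    have hkU : ∀ k, μ k U ≤ ENNReal.ofReal r := by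
      intro k
      rw [ENNReal.le_ofReal_iff_toReal_le (measure_ne_top _ _) hrnn, hrdef, hcdef]
      exact hbound_k k hUopen.measurableSet ht
    have h1 : μlim A ≤ ENNReal.ofReal r := by
      refine le_trans (measure_mono hAU) (le_trans (hOpen U hUopen) ?_)
      refine le_trans (Filter.liminf_le_liminf (Eventually.of_forall hkU)) ?_
      simp [Filter.liminf_const]
    have h2 : (μlim A).toReal ≤ r := ENNReal.toReal_le_of_le_ofReal hrnn h1
    refine le_trans h2 ?_
    have hPU' : (P U).toReal ≤ (P A).toReal + ε' := by
      have := ENNReal.toReal_mono (by finiteness) hPU.le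
      rwa [ENNReal.toReal_add (measure_ne_top _ _) ENNReal.ofReal_ne_top,
        ENNReal.toReal_ofReal hε'.le] at this
    have hcε : c * ε' = ε * t := by
      rw [hε'def, mul_div_cancel₀ _ hcpos.ne']
    rw [hrdef, div_le_iff₀ ht]
    have hexpand : ((B + c * (P A).toReal) / t + ε) * t
        = B + c * (P A).toReal + ε * t := by
      field_simp
    rw [hexpand]
    nlinarith
  have hlimac : μlim ≪ P := by
    refine Measure.AbsolutelyContinuous.mk fun A hA hPA => ?_
    have h0 : (μlim A).toReal ≤ 0 := by
      refine le_of_forall_pos_le_add fun ε hε => ?_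
      have ht : 0 < (B + 1) / ε := by positivity
      have := hbound_lim hA ht
      rw [hPA] at this
      simp only [ENNReal.toReal_zero, mul_zero, add_zero] at this
      rw [zero_add]
      refine le_trans this ?_
      rw [div_le_iff₀ ht]
      have : ε * ((B + 1) / ε) = B + 1 := by field_simp
      rw [this]; linarith
    have h0' : (μlim A).toReal = 0 := le_antisymm h0 ENNReal.toReal_nonneg
    rcases (ENNReal.toReal_eq_zero_iff _).mp h0' with h | h
    · exact h
    · exact absurd h (measure_ne_top _ _)
  -- Term A : ∫ |f k - flim| dμ k → 0
  have hTermA : Tendsto (fun k => ∫ x, |f k x - flim x| ∂(μ k)) atTop (𝓝 0) := by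
    rw [Metric.tendsto_atTop]
    intro ε hε
    obtain ⟨t, htdef⟩ : ∃ t : ℝ, t = 2 * (B + 1) / ε := ⟨_, rfl⟩
    have ht : 0 < t := by rw [htdef]; positivity
    have hBt : B < ε * t := by
      have h : ε * t = 2 * (B + 1) := by rw [htdef, mul_div_cancel₀ _ hε.ne']
      rw [h]; linarith
    have hDCT : Tendsto (fun k => ∫ x, Real.exp (t * |f k x - flim x|) ∂P) atTop (𝓝 1) := by
      have h := tendsto_integral_of_dominated_convergence (μ := P)
        (F := fun k x => Real.exp (t * |f k x - flim x|)) (f := fun _ => (1:ℝ))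
        (fun _ => Real.exp (t * (2 * C)))
        (fun k => (((hfmeas k).sub hflim).abs.const_mul t).exp.aestronglyMeasurable)
        (integrable_const _)
        (fun k => by
          filter_upwards [hflimC] with x hx
          rw [Real.norm_eq_abs, abs_of_pos (Real.exp_pos _)]
          refine Real.exp_le_exp.2 (mul_le_mul_of_nonneg_left ?_ ht.le)
          calc |f k x - flim x| ≤ |f k x| + |flim x| := abs_sub _ _
            _ ≤ 2 * C := by linarith [hfbd k x]) ?_
      · simpa using h
      · filter_upwards [hae] with x hx
        have h0 : Tendsto (fun k => t * |f k x - flim x|) atTop (𝓝 0) := by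
          have h1 := ((hx.sub (tendsto_const_nhds (x := flim x))).abs).const_mul t
          simpa using h1
        have h2 := (Real.continuous_exp.continuousAt (x := (0:ℝ))).tendsto.comp h0
        simpa [Function.comp_def] using h2
    have hev : ∀ᶠ k in atTop,
        ∫ x, Real.exp (t * |f k x - flim x|) ∂P < 1 + (ε * t - B) :=
      hDCT.eventually (gt_mem_nhds (by linarith))
    rw [eventually_atTop] at hev
    obtain ⟨N, hN⟩ := hev
    refine ⟨N, fun n hn => ?_⟩
    have hcm := change_of_measure P (μ n) (hprop n).1 (hprop n).2.1
      (fun x => t * |f n x - flim x|) (((hfmeas n).sub hflim).abs.const_mul t) (t * (2 * C))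
      (by
        filter_upwards [hflimC] with x hx
        rw [abs_of_nonneg (by positivity)]
        refine mul_le_mul_of_nonneg_left ?_ ht.le
        calc |f n x - flim x| ≤ |f n x| + |flim x| := abs_sub _ _
          _ ≤ 2 * C := by linarith [hfbd n x])
    rw [integral_const_mul] at hcm
    have h3 : t * ∫ x, |f n x - flim x| ∂(μ n) < ε * t := by
      have := hN n hn
      have h4 := (hprop n).2.2
      linarith
    have h5 : ∫ x, |f n x - flim x| ∂(μ n) < ε := by
      have h3' : t * ∫ x, |f n x - flim x| ∂(μ n) < t * ε := by linarith
      exact (mul_lt_mul_iff_right₀ ht).mp h3'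
    rw [Real.dist_eq, sub_zero,
      abs_of_nonneg (integral_nonneg fun x => abs_nonneg _)]
    exact h5
  -- Term B : ∫ flim dμ k → ∫ flim dμlim
  have hTermB : Tendsto (fun k => ∫ x, flim x ∂(μ k)) atTop (𝓝 (∫ x, flim x ∂μlim)) := by
    rw [Metric.tendsto_atTop]
    intro ε hε
    obtain ⟨δ, hδdef⟩ : ∃ d : ℝ, d = ε / 9 := ⟨_, rfl⟩
    have hδ : 0 < δ := by rw [hδdef]; positivity
    obtain ⟨ρ₀, hρ₀def⟩ : ∃ r : ℝ, r = ε / (9 * (C + 1)) := ⟨_, rfl⟩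
    have hρ₀ : 0 < ρ₀ := by rw [hρ₀def]; positivity
    obtain ⟨t, htdef⟩ : ∃ t : ℝ, t = 2 * (B + 1) / ρ₀ := ⟨_, rfl⟩
    have ht : 0 < t := by rw [htdef]; positivity
    obtain ⟨c, hcdef⟩ : ∃ c : ℝ, c = Real.exp t - 1 := ⟨_, rfl⟩
    have hcpos : 0 < c := by rw [hcdef]; linarith [Real.add_one_le_exp t]
    obtain ⟨η, hηdef⟩ : ∃ e : ℝ, e = δ * (ρ₀ * t / (2 * c)) := ⟨_, rfl⟩
    have hη : 0 < η := by rw [hηdef]; positivity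
    obtain ⟨g₀, hg₀, -⟩ :=
      (hflimInt P inferInstance Measure.AbsolutelyContinuous.rfl).exists_boundedContinuous_integral_sub_le hη
    set g : S →ᵇ ℝ := (g₀ ⊓ BoundedContinuousFunction.const S C) ⊔
      BoundedContinuousFunction.const S (-C) with hgdef
    have hgx : ∀ x, g x = max (min (g₀ x) C) (-C) := by
      intro x
      rw [hgdef]
      simp
    have hgC : ∀ x, |g x| ≤ C := by
      intro x
      rw [hgx, abs_le]
      refine ⟨le_max_right _ _, max_le (min_le_right _ _) (by linarith)⟩
    have hkey : ∀ᵐ x ∂P, |flim x - g x| ≤ |flim x - g₀ x| ∧ |flim x - g x| ≤ 2 * C := by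
      filter_upwards [hflimC] with x hx
      constructor
      · have hx' := abs_le.mp hx
        have h1 : flim x = max (min (flim x) C) (-C) := by
          rw [min_eq_left hx'.2, max_eq_left hx'.1]
        calc |flim x - g x| = |max (min (flim x) C) (-C) - max (min (g₀ x) C) (-C)| := by
              rw [← h1, hgx]
          _ ≤ |min (flim x) C - min (g₀ x) C| := abs_max_sub_max_le_abs _ _ _
          _ ≤ max |flim x - g₀ x| |C - C| := abs_min_sub_min_le_max _ _ _ _
          _ = |flim x - g₀ x| := by simp
      · calc |flim x - g x| ≤ |flim x| + |g x| := abs_sub _ _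
          _ ≤ 2 * C := by linarith [hgC x]
    set A : Set S := {x | δ ≤ |flim x - g x|} with hAdef
    have hAmeas : MeasurableSet A :=
      measurableSet_le measurable_const (hflim.sub g.continuous.measurable).abs
    have hPint : Integrable flim P := hflimInt P inferInstance Measure.AbsolutelyContinuous.rfl
    have habsintP : Integrable (fun x => |flim x - g x|) P :=
      (hPint.sub (g.integrable P)).abs
    have hintPg : ∫ x, |flim x - g x| ∂P ≤ η := by
      refine le_trans (integral_mono_ae habsintP ((hPint.sub (g₀.integrable P)).abs)
        (hkey.mono fun x hx => hx.1)) ?_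
      simpa [Real.norm_eq_abs] using hg₀
    have hPA : (P A).toReal ≤ η / δ := by
      have hm := mul_meas_ge_le_integral_of_nonneg (μ := P)
        (Eventually.of_forall fun x => abs_nonneg (flim x - g x)) habsintP δ
      rw [le_div_iff₀ hδ]
      calc (P A).toReal * δ = δ * (P A).toReal := by rw [mul_comm]
        _ ≤ ∫ x, |flim x - g x| ∂P := hm
        _ ≤ η := hintPg
    have est : ∀ (ν : Measure S), IsProbabilityMeasure ν → ν ≪ P →
        (ν A).toReal ≤ (B + c * (P A).toReal) / t →
        |∫ x, flim x ∂ν - ∫ x, g x ∂ν| ≤ ε / 3 := by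
      intro ν hνp hνac hνA
      haveI := hνp
      have hνflim := hflimInt ν hνp hνac
      have hgi : Integrable (fun x => g x) ν := g.integrable ν
      have habs : Integrable (fun x => |flim x - g x|) ν := (hνflim.sub hgi).abs
      have h1 : |∫ x, flim x ∂ν - ∫ x, g x ∂ν| ≤ ∫ x, |flim x - g x| ∂ν := by
        rw [← integral_sub hνflim hgi]
        have := norm_integral_le_integral_norm (μ := ν) (f := fun x => flim x - g x)
        simpa [Real.norm_eq_abs] using this
      have hsplit : ∫ x, |flim x - g x| ∂ν
          = ∫ x in A, |flim x - g x| ∂ν + ∫ x in Aᶜ, |flim x - g x| ∂ν :=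
        (integral_add_compl hAmeas habs).symm
      have hApart : ∫ x in A, |flim x - g x| ∂ν ≤ 2 * C * (ν A).toReal := by
        have hb : ∀ᵐ x ∂(ν.restrict A), |flim x - g x| ≤ 2 * C :=
          ae_restrict_of_ae (hνac.ae_le (hkey.mono fun x hx => hx.2))
        calc ∫ x in A, |flim x - g x| ∂ν ≤ ∫ _x in A, 2 * C ∂ν :=
              integral_mono_ae habs.restrict (integrable_const _) hb
          _ = 2 * C * (ν A).toReal := by rw [setIntegral_const, smul_eq_mul, mul_comm, measureReal_def]
      have hAcpart : ∫ x in Aᶜ, |flim x - g x| ∂ν ≤ δ := by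
        have hb : ∀ᵐ x ∂(ν.restrict Aᶜ), |flim x - g x| ≤ δ := by
          filter_upwards [ae_restrict_mem hAmeas.compl] with x hx
          exact le_of_lt (not_le.mp hx)
        have hν1 : (ν Aᶜ).toReal ≤ 1 := by
          have h2 : ν Aᶜ ≤ 1 := prob_le_one
          calc (ν Aᶜ).toReal ≤ (1 : ENNReal).toReal := ENNReal.toReal_mono (by simp) h2
            _ = 1 := by simp
        calc ∫ x in Aᶜ, |flim x - g x| ∂ν ≤ ∫ _x in Aᶜ, δ ∂ν :=
              integral_mono_ae habs.restrict (integrable_const _) hb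
          _ = (ν Aᶜ).toReal * δ := by rw [setIntegral_const, smul_eq_mul, measureReal_def]
          _ ≤ δ := by nlinarith [ENNReal.toReal_nonneg (a := ν Aᶜ)]
      have hρ₀t : ρ₀ * t = 2 * (B + 1) := by
        rw [htdef, mul_comm, div_mul_cancel₀ _ hρ₀.ne']
      have hbt : B / t ≤ ρ₀ / 2 := by
        rw [div_le_div_iff₀ ht (by norm_num : (0:ℝ) < 2)]
        nlinarith
      have hηδ : η / δ = ρ₀ * t / (2 * c) := by
        rw [hηdef, mul_comm, mul_div_assoc, div_self hδ.ne', mul_one]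
      have hct : c * (P A).toReal / t ≤ ρ₀ / 2 := by
        have h2 : (P A).toReal ≤ ρ₀ * t / (2 * c) := by
          rw [← hηδ]; exact hPA
        calc c * (P A).toReal / t ≤ c * (ρ₀ * t / (2 * c)) / t := by gcongr
          _ = ρ₀ / 2 := by
              field_simp [hcpos.ne', ht.ne']
      have hνA2 : (ν A).toReal ≤ ρ₀ := by
        refine le_trans hνA ?_
        rw [add_div]
        calc B / t + c * (P A).toReal / t ≤ ρ₀ / 2 + ρ₀ / 2 := add_le_add hbt hct
          _ = ρ₀ := by ring
      have hsum : 2 * C * (ν A).toReal + δ ≤ ε / 3 := by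
        have hkey2 : (C + 1) * ρ₀ = ε / 9 := by
          have hC1 : (C + 1) ≠ 0 := by positivity
          rw [hρ₀def]
          field_simp
        have h2C : 2 * C * (ν A).toReal ≤ 2 * ((C + 1) * ρ₀) := by
          nlinarith [ENNReal.toReal_nonneg (a := ν A), hρ₀.le]
        rw [hδdef]
        rw [hkey2] at h2C
        linarith
      calc |∫ x, flim x ∂ν - ∫ x, g x ∂ν| ≤ ∫ x, |flim x - g x| ∂ν := h1
        _ = _ := hsplit
        _ ≤ 2 * C * (ν A).toReal + δ := add_le_add hApart hAcpart
        _ ≤ ε / 3 := hsum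
    obtain ⟨N, hN⟩ := Metric.tendsto_atTop.mp (hweak g) (ε / 3) (by positivity)
    refine ⟨N, fun n hn => ?_⟩
    have eb1 := hbound_k n hAmeas ht
    have eb3 := hbound_lim hAmeas ht
    rw [← hcdef] at eb1 eb3
    have e1 := est (μ n) (hμ n) (hprop n).1 eb1
    have e3 := est μlim inferInstance hlimac eb3
    have e2 := hN n hn
    rw [Real.dist_eq] at e2 ⊢
    have e3' : |∫ x, g x ∂μlim - ∫ x, flim x ∂μlim| ≤ ε / 3 := by
      rw [abs_sub_comm]; exact e3
    calc |∫ x, flim x ∂(μ n) - ∫ x, flim x ∂μlim|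
        ≤ |∫ x, flim x ∂(μ n) - ∫ x, g x ∂(μ n)|
          + |∫ x, g x ∂(μ n) - ∫ x, flim x ∂μlim| := abs_sub_le _ _ _
      _ ≤ |∫ x, flim x ∂(μ n) - ∫ x, g x ∂(μ n)|
          + (|∫ x, g x ∂(μ n) - ∫ x, g x ∂μlim|
            + |∫ x, g x ∂μlim - ∫ x, flim x ∂μlim|) := by
          exact add_le_add le_rfl (abs_sub_le _ _ _)
      _ < ε := by linarith
  -- Final assembly
  have hdiff : Tendsto (fun k => ∫ x, f k x ∂(μ k) - ∫ x, flim x ∂μlim) atTop (𝓝 0) := by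
    have h2 : Tendsto (fun k => |∫ x, flim x ∂(μ k) - ∫ x, flim x ∂μlim|) atTop (𝓝 0) := by
      have := (hTermB.sub (tendsto_const_nhds (x := ∫ x, flim x ∂μlim))).abs
      simpa using this
    have hb : Tendsto (fun k => ∫ x, |f k x - flim x| ∂(μ k)
        + |∫ x, flim x ∂(μ k) - ∫ x, flim x ∂μlim|) atTop (𝓝 0) := by
      simpa using hTermA.add h2
    refine squeeze_zero_norm (fun k => ?_) hb
    have e1 : ∫ x, f k x ∂(μ k) - ∫ x, flim x ∂μlim
        = (∫ x, (f k x - flim x) ∂(μ k)) + (∫ x, flim x ∂(μ k) - ∫ x, flim x ∂μlim) := by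
      rw [integral_sub (hfkInt k) (hflimInt (μ k) (hμ k) (hprop k).1)]; ring
    rw [Real.norm_eq_abs, e1]
    refine le_trans (abs_add_le _ _) (add_le_add ?_ le_rfl)
    have := norm_integral_le_integral_norm (μ := μ k) (f := fun x => f k x - flim x)
    simpa [Real.norm_eq_abs] using this
  have := hdiff.add (tendsto_const_nhds (x := ∫ x, flim x ∂μlim))
  simpa using this
end

section
/- Let P be a probability measure on a measurable space and let f be a bounded measurable real-valued function. Define Z = ∫ e^{−f} dP and let μ* be the probability measure with density dμ*/dP = e^{−f}/Z. Then μ* is absolutely continuous with respect to P, KL(μ* ‖ P) is finite, and KL(μ* ‖ P) + ∫ f dμ* = −log Z; in particular the infimum in the variational formula −log ∫ e^{−f} dP = inf_{μ ≪ P} ( KL(μ ‖ P) + ∫ f dμ ) is attained at μ*. -/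
open MeasureTheory Filter Topology BoundedContinuousFunction Classical

/-- Gibbs' inequality: the KL integrand has nonnegative integral. -/
lemma aux_integral_llr_nonneg {Ω : Type*} [MeasurableSpace Ω] {μ ν : Measure Ω}
    [IsProbabilityMeasure μ] [IsProbabilityMeasure ν]
    (hμν : μ ≪ ν) (h : Integrable (llr μ ν) μ) : 0 ≤ ∫ x, llr μ ν x ∂μ := by
  have h_rn_int : Integrable (fun x => (ν.rnDeriv μ x).toReal) μ := by
    refine integrable_toReal_of_lintegral_ne_top
      (Measure.measurable_rnDeriv ν μ).aemeasurable ?_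
    exact (Measure.lintegral_rnDeriv_le.trans_lt (measure_lt_top ν Set.univ)).ne
  have h_bd : ∀ᵐ x ∂μ, - llr μ ν x ≤ (ν.rnDeriv μ x).toReal - 1 := by
    filter_upwards [exp_neg_llr hμν] with x hx
    have := Real.add_one_le_exp (- llr μ ν x)
    rw [hx] at this
    linarith
  have h1 : ∫ x, - llr μ ν x ∂μ ≤ ∫ x, ((ν.rnDeriv μ x).toReal - 1) ∂μ :=
    integral_mono_ae h.neg (h_rn_int.sub (integrable_const 1)) h_bd
  have h2 : ∫ x, ((ν.rnDeriv μ x).toReal - 1) ∂μ ≤ 0 := by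
    rw [integral_sub h_rn_int (integrable_const 1)]
    have h3 : ∫ x, (ν.rnDeriv μ x).toReal ∂μ = (∫⁻ x, ν.rnDeriv μ x ∂μ).toReal :=
      integral_toReal (Measure.measurable_rnDeriv ν μ).aemeasurable
        (Measure.rnDeriv_lt_top ν μ)
    have h4 : (∫⁻ x, ν.rnDeriv μ x ∂μ).toReal ≤ 1 := by
      have := Measure.lintegral_rnDeriv_le (μ := ν) (ν := μ)
      have h5 : (∫⁻ x, ν.rnDeriv μ x ∂μ).toReal ≤ (ν Set.univ).toReal :=
        ENNReal.toReal_mono (measure_ne_top ν _) this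
      simpa using h5
    simp only [integral_const, measure_univ, probReal_univ, ENNReal.toReal_one, smul_eq_mul, one_mul]
    linarith [h3 ▸ h4]
  rw [integral_neg] at h1
  linarith

theorem klDiv_tilted_attains_iInf
    {Ω : Type*} [MeasurableSpace Ω]
    (P : Measure Ω) [IsProbabilityMeasure P]
    (f : Ω → ℝ) (hf : Measurable f) (C : ℝ) (hfbd : ∀ x, |f x| ≤ C)
    (Z : ℝ) (hZ : Z = ∫ x, Real.exp (-(f x)) ∂P)
    (μstar : Measure Ω)
    (hμstar : μstar = P.withDensity (fun x => ENNReal.ofReal (Real.exp (-(f x)) / Z))) :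
    μstar ≪ P ∧ klDiv μstar P < ⊤ ∧
    klDiv μstar P + ((∫ x, f x ∂μstar : ℝ) : EReal) = ((- Real.log Z : ℝ) : EReal) ∧
    klDiv μstar P + ((∫ x, f x ∂μstar : ℝ) : EReal) =
      ⨅ (μ : Measure Ω) (_ : IsProbabilityMeasure μ) (_ : μ ≪ P) (_ : klDiv μ P < ⊤),
        klDiv μ P + ((∫ x, f x ∂μ : ℝ) : EReal) := by
  -- Basic integrability of exp(-f)
  have h_exp_int : Integrable (fun x => Real.exp (-(f x))) P := by
    refine (integrable_const (Real.exp C)).mono'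
      ((Real.measurable_exp.comp hf.neg).aestronglyMeasurable) (ae_of_all _ fun x => ?_)
    rw [Real.norm_eq_abs, Real.abs_exp]
    exact Real.exp_le_exp.2 (by linarith [(abs_le.1 (hfbd x)).1])
  -- f is integrable w.r.t. any finite measure
  have hfint : ∀ (μ : Measure Ω) [IsFiniteMeasure μ], Integrable f μ := by
    intro μ _
    exact (integrable_const C).mono' hf.aestronglyMeasurable
      (ae_of_all _ fun x => by rw [Real.norm_eq_abs]; exact hfbd x)
  -- μstar is the tilted measure
  have hμtilted : μstar = P.tilted (fun x => -(f x)) := by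
    rw [hμstar, Measure.tilted, hZ]
  have hZval : ∫ x, Real.exp (-(f x)) ∂P = Z := hZ.symm
  have hac : μstar ≪ P := hμtilted ▸ tilted_absolutelyContinuous P _
  haveI hprobstar : IsProbabilityMeasure μstar :=
    hμtilted ▸ isProbabilityMeasure_tilted h_exp_int
  -- the log-likelihood ratio of μstar w.r.t. P
  have h_llr : llr μstar P =ᵐ[P] fun x => -(f x) - Real.log Z := by
    have h1 := llr_tilted_left (μ := P) (ν := P) (f := fun x => -(f x))
      Measure.AbsolutelyContinuous.rfl h_exp_int hf.neg.aemeasurable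
    have h2 : llr P P =ᵐ[P] fun _ => (0 : ℝ) := by
      filter_upwards [Measure.rnDeriv_self P] with x hx
      simp [llr, hx]
    rw [← hμtilted] at h1
    filter_upwards [h1, h2] with x hx1 hx2
    rw [hx1, hx2, hZval]
    ring
  have h_llr' : llr μstar P =ᵐ[μstar] fun x => -(f x) - Real.log Z := hac.ae_le h_llr
  have h_int_star : Integrable (llr μstar P) μstar := by
    rw [integrable_congr h_llr']
    exact (hfint μstar).neg.sub (integrable_const _)
  have h_int_eq : ∫ x, llr μstar P x ∂μstar = -(∫ x, f x ∂μstar) - Real.log Z := by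
    have hneg : Integrable (fun x => -(f x)) μstar := (hfint μstar).neg
    rw [integral_congr_ae h_llr', integral_sub hneg (integrable_const _), integral_neg]
    simp
  have hkl : klDiv μstar P = ((-(∫ x, f x ∂μstar) - Real.log Z : ℝ) : EReal) := by
    rw [klDiv, if_pos ⟨hac, h_int_star⟩, h_int_eq]
  have hmain : klDiv μstar P + ((∫ x, f x ∂μstar : ℝ) : EReal)
      = ((- Real.log Z : ℝ) : EReal) := by
    have hr : (-(∫ x, f x ∂μstar) - Real.log Z) + ∫ x, f x ∂μstar = - Real.log Z := by ring
    rw [hkl, ← EReal.coe_add, hr]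
  -- Gibbs inequality for arbitrary competitors
  have hgibbs : ∀ (μ : Measure Ω) [IsProbabilityMeasure μ], μ ≪ P →
      Integrable (llr μ P) μ → - Real.log Z ≤ ∫ x, llr μ P x ∂μ + ∫ x, f x ∂μ := by
    intro μ _ hac' hint'
    have hμμstar : μ ≪ μstar := hμtilted ▸ hac'.trans (absolutelyContinuous_tilted h_exp_int)
    have h_int2 : Integrable (llr μ μstar) μ := by
      rw [hμtilted]
      exact integrable_llr_tilted_right (f := fun x => -(f x)) hac' (hfint μ).neg hint'
        h_exp_int
    have h_eq : ∫ x, llr μ μstar x ∂μ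
        = ∫ x, llr μ P x ∂μ - ∫ x, -(f x) ∂μ + Real.log Z := by
      rw [hμtilted, integral_llr_tilted_right (f := fun x => -(f x)) hac' (hfint μ).neg
        h_exp_int hint', hZval]
    have h0 : 0 ≤ ∫ x, llr μ μstar x ∂μ := aux_integral_llr_nonneg hμμstar h_int2
    rw [h_eq, integral_neg] at h0
    linarith
  refine ⟨hac, ?_, hmain, ?_⟩
  · rw [klDiv, if_pos ⟨hac, h_int_star⟩]
    exact EReal.coe_lt_top _
  · refine le_antisymm ?_ ?_
    · refine le_iInf fun μ => le_iInf fun hprob => le_iInf fun hac' => le_iInf fun hlt => ?_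
      have hcond : μ ≪ P ∧ Integrable (llr μ P) μ := by
        by_contra hc
        rw [klDiv, if_neg hc] at hlt
        exact lt_irrefl _ hlt
      rw [hmain, klDiv, if_pos hcond, ← EReal.coe_add]
      exact EReal.coe_le_coe_iff.2 (hgibbs μ hcond.1 hcond.2)
    · exact iInf_le_of_le μstar (iInf_le_of_le hprobstar (iInf_le_of_le hac
        (iInf_le_of_le (by rw [klDiv, if_pos ⟨hac, h_int_star⟩]; exact EReal.coe_lt_top _)
        le_rfl)))
end

section
/- Let m ≥ 1 and let γ be the standard Gaussian probability measure on ℝ^m (the m-fold product of the standard Gaussian measure on ℝ with mean 0 and variance 1). For every bounded measurable function f : ℝ^m → ℝ and every vector v ∈ ℝ^m, one has −log ∫_{ℝ^m} e^{−f(x)} dγ(x) ≤ (1/2)‖v‖² + ∫_{ℝ^m} f(x + v) dγ(x). -/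
open MeasureTheory ProbabilityTheory

open scoped ENNReal NNReal

namespace GaussShiftAux

lemma withDensity_map_equiv {α β : Type*} [MeasurableSpace α] [MeasurableSpace β]
    (e : α ≃ᵐ β) (μ : Measure α) {ρ : β → ℝ≥0∞} (hρ : Measurable ρ) :
    (μ.map e).withDensity ρ = (μ.withDensity (fun a => ρ (e a))).map e := by
  ext s hs
  rw [Measure.map_apply e.measurable hs, withDensity_apply _ hs,
    withDensity_apply _ (e.measurable hs), setLIntegral_map hs hρ e.measurable]

lemma withDensity_prod {α β : Type*} [MeasurableSpace α] [MeasurableSpace β]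
    (μ : Measure α) (ν : Measure β) [SigmaFinite μ] [SigmaFinite ν]
    {f : α → ℝ≥0∞} {g : β → ℝ≥0∞} (hf : Measurable f) (hg : Measurable g)
    [SigmaFinite (μ.withDensity f)] [SigmaFinite (ν.withDensity g)] :
    (μ.withDensity f).prod (ν.withDensity g)
      = (μ.prod ν).withDensity (fun p => f p.1 * g p.2) := by
  refine Measure.prod_eq fun s t hs ht => ?_
  rw [withDensity_apply _ (hs.prod ht), ← Measure.prod_restrict,
    lintegral_prod_mul hf.aemeasurable hg.aemeasurable,
    withDensity_apply _ hs, withDensity_apply _ ht]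

lemma pi_withDensity : ∀ (n : ℕ) (μ : Fin n → Measure ℝ), (∀ i, SigmaFinite (μ i)) →
    ∀ (f : Fin n → ℝ → ℝ≥0∞), (∀ i, Measurable (f i)) →
    (∀ i, SigmaFinite ((μ i).withDensity (f i))) →
    Measure.pi (fun i => (μ i).withDensity (f i))
      = (Measure.pi μ).withDensity (fun x => ∏ i, f i (x i)) := by
  intro n
  induction n with
  | zero =>
      intro μ _ f _ _
      have h1 : (fun x : Fin 0 → ℝ => ∏ i, f i (x i)) = 1 := by
        funext x; simp
      rw [h1, withDensity_one, Measure.pi_of_empty, Measure.pi_of_empty]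
  | succ n ih =>
      intro μ hμ f hfm hsf
      haveI : ∀ i, SigmaFinite (μ i) := hμ
      haveI : ∀ i, SigmaFinite ((μ i).withDensity (f i)) := hsf
      set e := MeasurableEquiv.piFinSuccAbove (fun _ : Fin (n + 1) => ℝ) 0 with he
      have h1 := measurePreserving_piFinSuccAbove (fun i => (μ i).withDensity (f i)) 0
      have h2 := measurePreserving_piFinSuccAbove μ 0
      have hIH := ih (fun j => μ (Fin.succAbove 0 j)) (fun j => hμ _)
        (fun j => f (Fin.succAbove 0 j)) (fun j => hfm _) (fun j => hsf _)
      haveI : SigmaFinite ((Measure.pi fun j => μ (Fin.succAbove 0 j)).withDensity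
          (fun z => ∏ j, f (Fin.succAbove 0 j) (z j))) := by
        rw [← hIH]; infer_instance
      have hρ : Measurable (fun x : Fin (n + 1) → ℝ => ∏ i, f i (x i)) :=
        Finset.measurable_prod _ fun i _ => (hfm i).comp (measurable_pi_apply i)
      have h0 : ∀ p : ℝ × (Fin n → ℝ), e.symm p 0 = p.1 := by
        intro p
        simp [he, MeasurableEquiv.piFinSuccAbove_symm_apply, Fin.insertNthEquiv]
      have hsucc : ∀ (p : ℝ × (Fin n → ℝ)) (j : Fin n),
          e.symm p (Fin.succAbove 0 j) = p.2 j := by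
        intro p j
        simp [he, MeasurableEquiv.piFinSuccAbove_symm_apply, Fin.insertNthEquiv]
      have hcomp : (fun p : ℝ × (Fin n → ℝ) => ∏ i, f i (e.symm p i))
          = fun p => f 0 p.1 * ∏ j, f (Fin.succAbove 0 j) (p.2 j) := by
        funext p
        have hsucc' : ∀ (j : Fin n), e.symm p (Fin.succ j) = p.2 j := by
          intro j
          have := hsucc p j
          rwa [Fin.succAbove_zero] at this
        simp [Fin.prod_univ_succAbove (fun i => f i (e.symm p i)) 0, h0, hsucc']
      calc Measure.pi (fun i => (μ i).withDensity (f i))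
          = ((((μ 0).withDensity (f 0)).prod
              (Measure.pi fun j => (μ (Fin.succAbove 0 j)).withDensity
                (f (Fin.succAbove 0 j)))).map e.symm) :=
            ((MeasurePreserving.symm e h1).map_eq).symm
        _ = ((((μ 0).prod (Measure.pi fun j => μ (Fin.succAbove 0 j))).withDensity
              (fun p => f 0 p.1 * ∏ j, f (Fin.succAbove 0 j) (p.2 j))).map e.symm) := by
            have hIH' : (Measure.pi fun j => (μ (Fin.succAbove 0 j)).withDensity
                  (f (Fin.succAbove 0 j)))
                = (Measure.pi fun j => μ (Fin.succAbove 0 j)).withDensity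
                    (fun z => ∏ j, f (Fin.succAbove 0 j) (z j)) := hIH
            have hwd := withDensity_prod (μ 0) (Measure.pi fun j => μ (Fin.succAbove 0 j))
              (f := f 0) (g := fun z => ∏ j, f (Fin.succAbove 0 j) (z j)) (hfm 0)
              (Finset.measurable_prod _ fun j _ => (hfm _).comp (measurable_pi_apply j))
            rw [hIH', hwd]
        _ = (Measure.pi μ).withDensity (fun x => ∏ i, f i (x i)) := by
            rw [← hcomp, ← withDensity_map_equiv e.symm _ hρ,
              (MeasurePreserving.symm e h2).map_eq]

lemma gaussianReal_zero_eq_withDensity (a : ℝ) :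
    gaussianReal 0 1 = (gaussianReal a 1).withDensity
      (fun x => ENNReal.ofReal (Real.exp (-(a * x) + a ^ 2 / 2))) := by
  have hmeas : Measurable fun x : ℝ => ENNReal.ofReal (Real.exp (-(a * x) + a ^ 2 / 2)) :=
    (((measurable_id.const_mul a).neg.add_const (a ^ 2 / 2)).exp).ennreal_ofReal
  rw [gaussianReal_of_var_ne_zero 0 one_ne_zero, gaussianReal_of_var_ne_zero a one_ne_zero,
    ← withDensity_mul _ (measurable_gaussianPDF a 1) hmeas]
  congr 1
  funext x
  simp only [Pi.mul_apply, gaussianPDF]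
  rw [← ENNReal.ofReal_mul (gaussianPDFReal_nonneg a 1 x)]
  congr 1
  simp only [gaussianPDFReal, NNReal.coe_one, mul_one]
  rw [mul_assoc, ← Real.exp_add]
  congr 1
  ring

end GaussShiftAux

open GaussShiftAux

theorem neg_log_integral_exp_neg_le_gaussian_shift
    (m : ℕ) (hm : 1 ≤ m)
    (f : (Fin m → ℝ) → ℝ) (hf : Measurable f) (C : ℝ) (hfbd : ∀ x, |f x| ≤ C)
    (v : Fin m → ℝ) :
    - Real.log (∫ x, Real.exp (-(f x)) ∂(Measure.pi fun _ : Fin m => gaussianReal 0 1)) ≤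
      (1 / 2) * (∑ i, (v i) ^ 2) +
        ∫ x, f (x + v) ∂(Measure.pi fun _ : Fin m => gaussianReal 0 1) := by
  set γ : Measure (Fin m → ℝ) := Measure.pi fun _ : Fin m => gaussianReal 0 1 with hγdef
  set μv : Measure (Fin m → ℝ) := Measure.pi fun i : Fin m => gaussianReal (v i) 1 with hμvdef
  haveI : IsProbabilityMeasure γ := by rw [hγdef]; infer_instance
  haveI : IsProbabilityMeasure μv := by rw [hμvdef]; infer_instance
  set S : ℝ := ∑ i, v i ^ 2 with hS
  set L : (Fin m → ℝ) → ℝ := fun x => ∑ i, v i * x i with hLdef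
  have hLmeas : Measurable L :=
    Finset.measurable_sum _ fun i _ => measurable_const.mul (measurable_pi_apply i)
  have haddc : Measurable fun x : Fin m → ℝ => x + v := measurable_add_const v
  set g : (Fin m → ℝ) → ℝ := fun x => -(f (x + v)) - L x - S / 2 with hgdef
  have hg_meas : Measurable g := ((hf.comp haddc).neg.sub hLmeas).sub measurable_const
  -- the density of γ with respect to μv
  set r : Fin m → ℝ → ℝ≥0∞ :=
    fun i x => ENNReal.ofReal (Real.exp (-(v i * x) + (v i) ^ 2 / 2)) with hrdef
  have hr_meas : ∀ i, Measurable (r i) := fun i =>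
    (((measurable_id.const_mul (v i)).neg.add_const ((v i) ^ 2 / 2)).exp).ennreal_ofReal
  have hγ_eq : γ = μv.withDensity (fun x => ∏ i, r i (x i)) := by
    have h1 : (fun _ : Fin m => gaussianReal 0 1)
        = fun i => (gaussianReal (v i) 1).withDensity (r i) :=
      funext fun i => gaussianReal_zero_eq_withDensity (v i)
    rw [hγdef, h1]
    exact pi_withDensity m _ (fun i => inferInstance) r hr_meas
      (fun i => by rw [← gaussianReal_zero_eq_withDensity (v i)]; infer_instance)
  have hρ0_meas : Measurable (fun x : Fin m → ℝ => ∏ i, r i (x i)) :=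
    Finset.measurable_prod _ fun i _ => (hr_meas i).comp (measurable_pi_apply i)
  have hρ0 : ∀ x : Fin m → ℝ,
      (∏ i, r i (x i)) = ENNReal.ofReal (Real.exp (-(L x) + S / 2)) := by
    intro x
    have hsum : ∑ i, (-(v i * x i) + (v i) ^ 2 / 2) = -(L x) + S / 2 := by
      rw [Finset.sum_add_distrib, Finset.sum_neg_distrib, ← Finset.sum_div]
    rw [hrdef, ← hsum, Real.exp_sum,
      ENNReal.ofReal_prod_of_nonneg (fun i _ => (Real.exp_pos _).le)]
  -- the translation map
  have hmp : MeasurePreserving (fun x : Fin m → ℝ => x + v) γ μv := by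
    have h := measurePreserving_pi (fun _ : Fin m => gaussianReal 0 1)
      (fun i => gaussianReal (v i) 1)
      (f := fun i => (· + v i))
      (fun i => ⟨measurable_add_const (v i), by
        rw [gaussianReal_map_add_const, zero_add]⟩)
    exact h
  -- key identity at the level of lintegrals
  set A : ℝ≥0∞ := ∫⁻ x, ENNReal.ofReal (Real.exp (-(f x))) ∂γ with hA
  have hexp_f_meas : Measurable fun x : Fin m → ℝ => ENNReal.ofReal (Real.exp (-(f x))) :=
    (Real.measurable_exp.comp hf.neg).ennreal_ofReal
  have hF_meas : Measurable fun y : Fin m → ℝ =>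
      ENNReal.ofReal (Real.exp (-(f y) - L y + S / 2)) :=
    (Real.measurable_exp.comp ((hf.neg.sub hLmeas).add_const (S / 2))).ennreal_ofReal
  have hLshift : ∀ x : Fin m → ℝ, L (x + v) = L x + S := by
    intro x
    simp only [hLdef, hS, Pi.add_apply, mul_add, sq]
    rw [Finset.sum_add_distrib]
  have hkey : A = ∫⁻ x, ENNReal.ofReal (Real.exp (g x)) ∂γ := by
    calc A = ∫⁻ y, ((fun x : Fin m → ℝ => ∏ i, r i (x i))
            * fun x : Fin m → ℝ => ENNReal.ofReal (Real.exp (-(f x)))) y ∂μv := by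
          rw [hA, hγ_eq, lintegral_withDensity_eq_lintegral_mul _ hρ0_meas hexp_f_meas]
      _ = ∫⁻ y, ENNReal.ofReal (Real.exp (-(f y) - L y + S / 2)) ∂μv := by
          refine lintegral_congr fun y => ?_
          simp only [Pi.mul_apply]
          rw [hρ0 y, ← ENNReal.ofReal_mul (Real.exp_pos _).le, ← Real.exp_add]
          congr 1
          ring
      _ = ∫⁻ x, ENNReal.ofReal (Real.exp (-(f (x + v)) - L (x + v) + S / 2)) ∂γ := by
          rw [← hmp.map_eq, lintegral_map hF_meas haddc]
      _ = ∫⁻ x, ENNReal.ofReal (Real.exp (g x)) ∂γ := by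
          refine lintegral_congr fun x => ?_
          rw [hLshift x]
          congr 1
          simp only [hgdef]
          ring
  -- A is finite
  have hAlt : A < ⊤ := by
    have hle : A ≤ ∫⁻ _, ENNReal.ofReal (Real.exp C) ∂γ := by
      refine lintegral_mono fun x => ENNReal.ofReal_le_ofReal (Real.exp_le_exp.mpr ?_)
      have h := abs_le.mp (hfbd x)
      linarith [h.1]
    have : (∫⁻ _, ENNReal.ofReal (Real.exp C) ∂γ) = ENNReal.ofReal (Real.exp C) := by
      simp [lintegral_const]
    exact lt_of_le_of_lt (this ▸ hle) ENNReal.ofReal_lt_top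
  -- integrability facts
  have hIntExpG : Integrable (fun x => Real.exp (g x)) γ := by
    refine ⟨(Real.measurable_exp.comp hg_meas).aestronglyMeasurable, ?_⟩
    rw [hasFiniteIntegral_iff_ofReal (ae_of_all _ fun x => (Real.exp_pos _).le)]
    rw [← hkey]
    exact hAlt
  have hintfv : Integrable (fun x => f (x + v)) γ :=
    ⟨(hf.comp haddc).aestronglyMeasurable,
      HasFiniteIntegral.of_bounded (C := C)
        (ae_of_all _ fun x => by simpa [Real.norm_eq_abs] using hfbd (x + v))⟩
  -- integrability of coordinate functions
  have hmap_eval : ∀ i : Fin m, Measure.map (fun x : Fin m → ℝ => x i) γ = gaussianReal 0 1 := by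
    intro i
    ext s hs
    rw [Measure.map_apply (measurable_pi_apply i) hs]
    have hpre : (fun x : Fin m → ℝ => x i) ⁻¹' s
        = Set.pi Set.univ (Function.update (fun _ : Fin m => (Set.univ : Set ℝ)) i s) := by
      ext x
      simp only [Set.mem_preimage, Set.mem_univ_pi, Function.update_apply]
      constructor
      · intro hx j
        by_cases hj : j = i
        · subst hj; simpa using hx
        · simp [hj]
      · intro hx
        have := hx i
        simpa using this
    rw [hγdef, hpre, Measure.pi_pi]
    rw [Finset.prod_eq_single i (fun j _ hj => by simp [Function.update_apply, hj])
      (by simp)]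
    simp
  have hint_eval : ∀ i : Fin m, Integrable (fun x : Fin m → ℝ => x i) γ := by
    intro i
    have h1 : Integrable (fun y : ℝ => y) (gaussianReal 0 1) := by
      rw [gaussianReal_of_var_ne_zero 0 one_ne_zero,
        integrable_withDensity_iff (measurable_gaussianPDF 0 1)
          (ae_of_all _ fun x => ENNReal.ofReal_lt_top)]
      have h2 : Integrable
          (fun x : ℝ => (Real.sqrt (2 * Real.pi))⁻¹ * (x * Real.exp (-(1/2) * x ^ 2)))
          volume :=
        (integrable_mul_exp_neg_mul_sq (by norm_num : (0:ℝ) < 1/2)).const_mul _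
      refine h2.congr (ae_of_all _ fun x => ?_)
      have hnn : 0 ≤ gaussianPDFReal 0 1 x := gaussianPDFReal_nonneg 0 1 x
      simp only [gaussianPDF, ENNReal.toReal_ofReal hnn]
      simp only [gaussianPDFReal, NNReal.coe_one, mul_one, sub_zero]
      have harg : -(1/2 : ℝ) * x ^ 2 = -x ^ 2 / 2 := by ring
      rw [harg]
      ring
    have h3 := (integrable_map_measure measurable_id.aestronglyMeasurable
      (measurable_pi_apply i).aemeasurable (μ := γ))
    rw [hmap_eval i] at h3
    exact h3.mp h1
  have hLint : Integrable L γ :=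
    integrable_finset_sum _ fun i _ => (hint_eval i).const_mul (v i)
  have hintg : Integrable g γ := ((hintfv.neg).sub hLint).sub (integrable_const _)
  -- the negation map preserves γ, so ∫ L dγ = 0
  have hneg1 : Measure.map (fun y : ℝ => -y) (gaussianReal 0 1) = gaussianReal 0 1 := by
    have h2 : (fun y : ℝ => -y) = fun y : ℝ => (-1 : ℝ) * y := by
      funext y; ring
    have h3 : ((⟨(-1 : ℝ)^2, sq_nonneg _⟩ : ℝ≥0) * 1) = 1 := by
      ext; norm_num
    rw [h2]
    rw [gaussianReal_map_const_mul (μ := 0) (v := 1) (-1)]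
    exact congrArg₂ gaussianReal (by ring) h3
  have hnegmp : MeasurePreserving (fun x : Fin m → ℝ => -x) γ γ := by
    have h := measurePreserving_pi (fun _ : Fin m => gaussianReal 0 1)
      (fun _ : Fin m => gaussianReal 0 1)
      (f := fun _ => fun y : ℝ => -y)
      (fun i => ⟨measurable_neg, hneg1⟩)
    exact h
  have hL0 : ∫ x, L x ∂γ = 0 := by
    have h1 : ∫ x, L x ∂γ = ∫ x, L (-x) ∂γ := by
      conv_lhs => rw [← hnegmp.map_eq]
      rw [integral_map hnegmp.measurable.aemeasurable hLmeas.aestronglyMeasurable]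
    have h2 : ∀ x : Fin m → ℝ, L (-x) = -L x := by
      intro x
      simp [hLdef, mul_neg, Finset.sum_neg_distrib]
    simp only [h2, integral_neg] at h1
    linarith
  -- value of ∫ g
  have hc : ∫ x, g x ∂γ = -(∫ x, f (x + v) ∂γ) - S / 2 := by
    have hi1 : Integrable (fun x => -f (x + v)) γ := hintfv.neg
    have hi2 : Integrable (fun x => -f (x + v) - L x) γ := hi1.sub hLint
    rw [hgdef]
    rw [integral_sub hi2 (integrable_const _), integral_sub hi1 hLint,
      integral_neg, hL0, integral_const]
    simp
  set c : ℝ := ∫ x, g x ∂γ with hcdef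
  -- Jensen-type lower bound
  have hlow : Real.exp c ≤ ∫ x, Real.exp (g x) ∂γ := by
    have hpt : ∀ x, Real.exp c * (1 + (g x - c)) ≤ Real.exp (g x) := by
      intro x
      have h1 : (g x - c) + 1 ≤ Real.exp (g x - c) := Real.add_one_le_exp _
      calc Real.exp c * (1 + (g x - c)) ≤ Real.exp c * Real.exp (g x - c) := by
            apply mul_le_mul_of_nonneg_left _ (Real.exp_pos c).le
            linarith
        _ = Real.exp (g x) := by
            rw [← Real.exp_add]
            ring_nf
    have hint_sub : Integrable (fun x => g x - c) γ := hintg.sub (integrable_const c)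
    have hint_1add : Integrable (fun x => 1 + (g x - c)) γ :=
      (integrable_const 1).add hint_sub
    have hint_lhs : Integrable (fun x => Real.exp c * (1 + (g x - c))) γ :=
      hint_1add.const_mul _
    have hmono := integral_mono hint_lhs hIntExpG hpt
    have heq : ∫ x, Real.exp c * (1 + (g x - c)) ∂γ = Real.exp c := by
      rw [integral_const_mul, integral_add (integrable_const 1) hint_sub,
        integral_sub hintg (integrable_const c), integral_const, integral_const]
      simp [hcdef]
    rw [heq] at hmono
    exact hmono
  -- relate the two real integrals via A
  have hA1 : ∫ x, Real.exp (-(f x)) ∂γ = A.toReal := by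
    rw [integral_eq_lintegral_of_nonneg_ae (f := fun x => Real.exp (-(f x))) (ae_of_all _ fun x => (Real.exp_pos _).le)
      (Real.measurable_exp.comp hf.neg).aestronglyMeasurable]
  have hA2 : ∫ x, Real.exp (g x) ∂γ = A.toReal := by
    rw [integral_eq_lintegral_of_nonneg_ae (ae_of_all _ fun x => (Real.exp_pos _).le)
      (Real.measurable_exp.comp hg_meas).aestronglyMeasurable, ← hkey]
  have haexp : ∫ x, Real.exp (-(f x)) ∂γ = ∫ x, Real.exp (g x) ∂γ := by
    rw [hA1, hA2]
  have hapos : 0 < ∫ x, Real.exp (-(f x)) ∂γ := by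
    rw [haexp]
    exact lt_of_lt_of_le (Real.exp_pos c) hlow
  have hlog : c ≤ Real.log (∫ x, Real.exp (-(f x)) ∂γ) := by
    rw [Real.le_log_iff_exp_le hapos, haexp]
    exact hlow
  have hcval : c = -(∫ x, f (x + v) ∂γ) - S / 2 := hc
  have : -Real.log (∫ x, Real.exp (-(f x)) ∂γ) ≤ -c := by linarith
  calc -Real.log (∫ x, Real.exp (-(f x)) ∂γ) ≤ -c := this
    _ = (1/2) * S + ∫ x, f (x + v) ∂γ := by rw [hcval]; ring
end
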